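/- arXiv:1611.07682 — 2 statements merged into one kernel-verified Lean document; each statement's English description precedes it below -/
import Mathlib

section
/- Let I = (G,s,t,c,Q) be a QSPP instance such that every s-t path in G has the same length L, and suppose Q is a symmetric weak sum matrix, i.e., there is a vector a indexed by arcs with q_{e,f} = a_e + a_f for all pairs of distinct arcs e ≠ f. Then I is linearizable; in particular, the nonnegative vector c' defined by c'_e = 2(L−1)a_e + c_e satisfies C(P,c,Q) = C(P,c') for every s-t path P. -/
/-- An `s`-`t` path in the digraph on vertex type `V` with arc relation `A`,
represented as the list of its (distinct) vertices. -/
def IsPath {V : Type*} (A : V → V → Prop) (s t : V) (P : List V) : Prop :=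
  2 ≤ P.length ∧ P.head? = some s ∧ P.getLast? = some t ∧ P.Nodup ∧ P.Chain' A

/-- The arcs traversed by a path, as the list of ordered pairs of consecutive vertices. -/
def arcsOf {V : Type*} (P : List V) : List (V × V) :=
  P.zip P.tail

/-- Linear cost `C(P,c)` of a path. -/
noncomputable def linCost {V : Type*} (c : V × V → ℝ) (P : List V) : ℝ :=
  ((arcsOf P).map c).sum

/-- Total (quadratic) cost `C(P,c,Q)` of a path: the sum of the interaction costs over all
ordered pairs of arcs of `P` plus the sum of the linear costs of the arcs of `P`. -/
noncomputable def cost {V : Type*} (c : V × V → ℝ) (Q : V × V → V × V → ℝ)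
    (P : List V) : ℝ :=
  ((arcsOf P).map fun e => ((arcsOf P).map fun f => Q e f).sum).sum + linCost c P

/-- A QSPP instance `(G,s,t,c,Q)` is linearizable if there is a nonnegative cost vector `c'`
such that `C(P,c,Q) = C(P,c')` for every `s`-`t` path `P`. -/
def Linearizable {V : Type*} (A : V → V → Prop) (s t : V) (c : V × V → ℝ)
    (Q : V × V → V × V → ℝ) : Prop :=
  ∃ c' : V × V → ℝ, (∀ e, 0 ≤ c' e) ∧
    ∀ P, IsPath A s t P → cost c Q P = linCost c' P

section Aux
variable {V : Type*}

lemma arcsOf_nil : arcsOf ([] : List V) = [] := rfl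
lemma arcsOf_single (x : V) : arcsOf [x] = [] := rfl
lemma arcsOf_cons₂ (x y : V) (l : List V) :
    arcsOf (x :: y :: l) = (x, y) :: arcsOf (y :: l) := rfl

lemma fst_mem_of_mem_arcsOf : ∀ {P : List V} {e : V × V}, e ∈ arcsOf P → e.1 ∈ P
  | [], _, h => by simp [arcsOf_nil] at h
  | [x], _, h => by simp [arcsOf_single] at h
  | x :: y :: l, e, h => by
      rw [arcsOf_cons₂] at h
      rcases List.mem_cons.1 h with h | h
      · subst h; exact List.mem_cons_self
      · exact List.mem_cons_of_mem _ (fst_mem_of_mem_arcsOf h)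

lemma fst_mem_dropLast_of_mem_arcsOf :
    ∀ {P : List V} {e : V × V}, e ∈ arcsOf P → e.1 ∈ P.dropLast
  | [], _, h => by simp [arcsOf_nil] at h
  | [x], _, h => by simp [arcsOf_single] at h
  | x :: y :: l, e, h => by
      rw [arcsOf_cons₂] at h
      rcases List.mem_cons.1 h with h | h
      · subst h; simp
      · have := fst_mem_dropLast_of_mem_arcsOf h
        simp only [List.dropLast_cons₂] at *
        exact List.mem_cons_of_mem _ this

lemma snd_mem_tail_of_mem_arcsOf :
    ∀ {P : List V} {e : V × V}, e ∈ arcsOf P → e.2 ∈ P.tail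
  | [], _, h => by simp [arcsOf_nil] at h
  | [x], _, h => by simp [arcsOf_single] at h
  | x :: y :: l, e, h => by
      rw [arcsOf_cons₂] at h
      rcases List.mem_cons.1 h with h | h
      · subst h; exact List.mem_cons_self
      · exact List.mem_cons_of_mem _ (snd_mem_tail_of_mem_arcsOf h)

lemma arc_rel {A : V → V → Prop} :
    ∀ {P : List V}, P.Chain' A → ∀ e ∈ arcsOf P, A e.1 e.2
  | [], _, e, h => by simp [arcsOf_nil] at h
  | [x], _, e, h => by simp [arcsOf_single] at h
  | x :: y :: l, hch, e, h => by
      rw [arcsOf_cons₂] at h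
      unfold List.Chain' at hch; rw [List.isChain_cons_cons] at hch
      rcases List.mem_cons.1 h with h | h
      · subst h; exact hch.1
      · exact arc_rel hch.2 e h

lemma arcsOf_nodup : ∀ {P : List V}, P.Nodup → (arcsOf P).Nodup
  | [], _ => by simp [arcsOf_nil]
  | [x], _ => by simp [arcsOf_single]
  | x :: y :: l, h => by
      rw [arcsOf_cons₂, List.nodup_cons]
      refine ⟨fun hmem => ?_, arcsOf_nodup (List.nodup_cons.1 h).2⟩
      have : (x, y).1 ∈ y :: l := fst_mem_of_mem_arcsOf hmem
      exact (List.nodup_cons.1 h).1 this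

lemma arc_ne {P : List V} (h : P.Nodup) {e : V × V} (he : e ∈ arcsOf P) :
    e.1 ≠ e.2 := by
  induction P with
  | nil => simp [arcsOf_nil] at he
  | cons x l ih =>
      match l, he with
      | [], he => simp [arcsOf_single] at he
      | y :: l, he =>
        rw [arcsOf_cons₂] at he
        rcases List.mem_cons.1 he with h' | h'
        · subst h'
          intro hxy
          exact (List.nodup_cons.1 h).1 (by rw [show x = y from hxy]; exact List.mem_cons_self)
        · exact ih (List.nodup_cons.1 h).2 h'

lemma telescope (φ : V → ℝ) :
    ∀ (P : List V) (x y : V), P.head? = some x → P.getLast? = some y →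
      ((arcsOf P).map fun e => φ e.1 - φ e.2).sum = φ x - φ y
  | [], x, y, hh, _ => by simp at hh
  | [z], x, y, hh, hl => by
      simp only [List.head?_cons, Option.some.injEq] at hh
      simp only [List.getLast?_singleton, Option.some.injEq] at hl
      subst hh; subst hl; simp [arcsOf_single]
  | z :: w :: l, x, y, hh, hl => by
      simp only [List.head?_cons, Option.some.injEq] at hh
      subst hh
      have hl' : (w :: l).getLast? = some y := by
        rw [List.getLast?_cons_cons] at hl; exact hl
      rw [arcsOf_cons₂, List.map_cons, List.sum_cons,
        telescope φ (w :: l) w y (by simp) hl']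
      ring

lemma sum_map_const' {α : Type*} (l : List α) (k : ℝ) :
    (l.map fun _ => k).sum = (l.length : ℝ) * k := by
  induction l with
  | nil => simp
  | cons x l ih => simp [ih]; push_cast; ring

lemma sum_map_add' {α : Type*} (f g : α → ℝ) (l : List α) :
    (l.map fun e => f e + g e).sum = (l.map f).sum + (l.map g).sum :=
  List.sum_map_add

lemma quad_sum {α : Type*} (Q : α → α → ℝ) (a : α → ℝ) :
    ∀ (E : List α), E.Nodup → (∀ e ∈ E, Q e e = 0) →
      (∀ e ∈ E, ∀ f ∈ E, e ≠ f → Q e f = a e + a f) →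
      (E.map fun e => (E.map fun f => Q e f).sum).sum
        = 2 * ((E.length : ℝ) - 1) * (E.map a).sum
  | [], _, _, _ => by simp
  | e :: E, hnd, hd, hs => by
      have heE : e ∉ E := (List.nodup_cons.1 hnd).1
      have hndE : E.Nodup := (List.nodup_cons.1 hnd).2
      have row : (E.map fun f => Q e f).sum
          = (E.length : ℝ) * a e + (E.map a).sum := by
        have : (E.map fun f => Q e f) = E.map fun f => a e + a f := by
          refine List.map_congr_left fun f hf => ?_
          exact hs e (List.mem_cons_self) f (List.mem_cons_of_mem _ hf)
            (fun h => heE (h ▸ hf))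
        rw [this, sum_map_add' (fun _ => a e) a, sum_map_const']
      have col : ∀ e' ∈ E, Q e' e = a e' + a e := fun e' he' =>
        hs e' (List.mem_cons_of_mem _ he') e (List.mem_cons_self)
          (fun h => heE (h ▸ he'))
      have ih := quad_sum Q a E hndE
        (fun f hf => hd f (List.mem_cons_of_mem _ hf))
        (fun f hf g hg => hs f (List.mem_cons_of_mem _ hf) g (List.mem_cons_of_mem _ hg))
      have expand : (E.map fun e' => ((e :: E).map fun f => Q e' f).sum).sum
          = ((E.map a).sum + (E.length : ℝ) * a e)
            + (E.map fun e' => (E.map fun f => Q e' f).sum).sum := by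
        have : (E.map fun e' => ((e :: E).map fun f => Q e' f).sum)
            = E.map fun e' => (a e' + a e) + (E.map fun f => Q e' f).sum := by
          refine List.map_congr_left fun e' he' => ?_
          rw [List.map_cons, List.sum_cons, col e' he']
        rw [this, sum_map_add', sum_map_add' a (fun _ => a e), sum_map_const']
      rw [List.map_cons, List.sum_cons, List.map_cons, List.sum_cons,
        hd e (List.mem_cons_self), row, expand, ih, List.map_cons, List.sum_cons,
        List.length_cons]
      push_cast
      ring
end Aux

section Aux2
variable {V : Type*}

lemma sum_map_mul_left' {α : Type*} (l : List α) (k : ℝ) (f : α → ℝ) :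
    (l.map fun e => k * f e).sum = k * (l.map f).sum := by
  induction l with
  | nil => simp
  | cons x l ih => simp [ih]; ring

lemma length_arcsOf (P : List V) : (arcsOf P).length = P.length - 1 := by
  rw [arcsOf, List.length_zip, List.length_tail]; omega

lemma not_getLast_mem_dropLast {l : List V} {t : V} (hnd : l.Nodup)
    (hl : l.getLast? = some t) : t ∉ l.dropLast := by
  intro hmem
  have hne : l ≠ [] := by rintro rfl; simp at hl
  rw [List.getLast?_eq_getLast hne] at hl
  have ht : l.getLast hne = t := Option.some.inj hl
  have heq := List.dropLast_append_getLast hne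
  have hnd' : (l.dropLast ++ [l.getLast hne]).Nodup := heq.symm ▸ hnd
  rw [List.nodup_append] at hnd'
  exact hnd'.2.2 t hmem t (by simp [ht]) rfl

lemma st_not_arc {s t : V} : ∀ {P : List V}, P.Nodup → P.head? = some s →
    P.getLast? = some t → 3 ≤ P.length → (s, t) ∉ arcsOf P
  | [], _, hh, _, _ => by simp at hh
  | [x], _, _, _, h3 => by simp at h3
  | [x, y], _, _, _, h3 => by simp at h3
  | x :: y :: z :: l, hnd, hh, hl, _ => by
      simp only [List.head?_cons, Option.some.injEq] at hh
      intro hmem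
      rw [arcsOf_cons₂] at hmem
      rcases List.mem_cons.1 hmem with h | h
      · have ht : t = y := congrArg Prod.snd h
        have h1 : (y :: z :: l).getLast? = some t := by
          rw [List.getLast?_cons_cons] at hl; exact hl
        have h2 : (z :: l).getLast? = some t := by
          rw [List.getLast?_cons_cons] at h1; exact h1
        have hne : (z :: l) ≠ [] := by simp
        rw [List.getLast?_eq_getLast hne] at h2
        have htm : t ∈ z :: l := (Option.some.inj h2) ▸ List.getLast_mem hne
        rw [ht] at htm
        exact (List.nodup_cons.1 (List.nodup_cons.1 hnd).2).1 htm
      · have h1 : (s, t).1 ∈ y :: z :: l := fst_mem_of_mem_arcsOf h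
        rw [hh] at hnd
        exact (List.nodup_cons.1 hnd).1 h1
end Aux2


/-- If all `s`-`t` paths have the same length `L` and `Q` is a symmetric weak sum matrix
(`q_{ef} = a_e + a_f` for distinct arcs `e ≠ f`), then the instance is linearizable; in
particular `c'_e = 2(L-1)a_e + c_e` satisfies `C(P,c,Q) = C(P,c')` for every path. -/
theorem stmt_5 {V : Type*} (A : V → V → Prop) (s t : V)
    (c : V × V → ℝ) (Q : V × V → V × V → ℝ)
    (hc : ∀ e, 0 ≤ c e) (hQ0 : ∀ e f, 0 ≤ Q e f)
    (hQs : ∀ e f, Q e f = Q f e) (hQd : ∀ e, Q e e = 0)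
    (L : ℕ) (hlen : ∀ P, IsPath A s t P → (arcsOf P).length = L)
    (a : V × V → ℝ)
    (hsum : ∀ e f : V × V, A e.1 e.2 → A f.1 f.2 → e ≠ f → Q e f = a e + a f) :
    Linearizable A s t c Q ∧
      ∀ P, IsPath A s t P →
        cost c Q P = linCost (fun e => 2 * ((L : ℝ) - 1) * a e + c e) P := by
  classical
  set lam : V × V → ℝ := fun e => 2 * ((L : ℝ) - 1) * a e + c e with hlamdef
  have key : ∀ P, IsPath A s t P → cost c Q P = linCost lam P := by
    intro P hP
    unfold cost
    obtain ⟨hlenP, hh, hl, hnd, hch⟩ := hP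
    have hq := quad_sum Q a (arcsOf P) (arcsOf_nodup hnd) (fun e _ => hQd e)
      (fun e he f hf hef => hsum e f (arc_rel hch e he) (arc_rel hch f hf) hef)
    rw [hq, hlen P ⟨hlenP, hh, hl, hnd, hch⟩]
    unfold linCost
    have : ((arcsOf P).map lam).sum
        = ((arcsOf P).map fun e => 2 * ((L : ℝ) - 1) * a e).sum
          + ((arcsOf P).map c).sum := by
      rw [hlamdef, ← sum_map_add']
    rw [this, sum_map_mul_left']
  refine ⟨?_, key⟩
  unfold Linearizable
  by_cases hbad : ∃ e : V × V, (∃ P, IsPath A s t P ∧ e ∈ arcsOf P) ∧ lam e < 0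
  · obtain ⟨e0, ⟨P0, hP0, he0⟩, hneg⟩ := hbad
    obtain ⟨hlenP0, hh0, hl0, hnd0, hch0⟩ := hP0
    have hLa : (arcsOf P0).length = L := hlen P0 ⟨hlenP0, hh0, hl0, hnd0, hch0⟩
    have hlenA := length_arcsOf P0
    have hL1 : 1 ≤ L := by omega
    have hLr : (0 : ℝ) ≤ (L : ℝ) - 1 := by
      have : (1 : ℝ) ≤ (L : ℝ) := by exact_mod_cast hL1
      linarith
    have hL2 : 2 ≤ L := by
      by_contra h
      have hL1' : L = 1 := by omega
      have : lam e0 = c e0 := by rw [hlamdef]; simp [hL1']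
      rw [this] at hneg
      exact absurd (hc e0) (not_le.2 hneg)
    have hA0 : A e0.1 e0.2 := arc_rel hch0 e0 he0
    have hne0 : e0.1 ≠ e0.2 := arc_ne hnd0 he0
    have hpair : ∀ f : V × V, (∃ P, IsPath A s t P ∧ f ∈ arcsOf P) → f ≠ e0 →
        0 ≤ lam e0 + lam f := by
      rintro f ⟨P, hP, hf⟩ hfn
      have hAf : A f.1 f.2 := arc_rel hP.2.2.2.2 f hf
      have hQef := hsum e0 f hA0 hAf (fun h => hfn h.symm)
      have : lam e0 + lam f = 2 * ((L : ℝ) - 1) * Q e0 f + (c e0 + c f) := by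
        rw [hlamdef, hQef]; ring
      rw [this]
      have h1 : 0 ≤ 2 * ((L : ℝ) - 1) * Q e0 f :=
        mul_nonneg (by linarith) (hQ0 _ _)
      have := hc e0; have := hc f
      linarith
    have hs_tail : s ∉ P0.tail := by
      cases P0 with
      | nil => simp at hh0
      | cons x r =>
          simp only [List.head?_cons, Option.some.injEq] at hh0
          subst hh0
          exact (List.nodup_cons.1 hnd0).1
    have hv_ne_s : e0.2 ≠ s := fun h => hs_tail (h ▸ snd_mem_tail_of_mem_arcsOf he0)
    have ht_dl : t ∉ P0.dropLast := not_getLast_mem_dropLast hnd0 hl0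
    have hu_ne_t : e0.1 ≠ t := fun h => ht_dl (h ▸ fst_mem_dropLast_of_mem_arcsOf he0)
    have hphi : ∃ φ : V → ℝ, φ s = 0 ∧ φ t = 0 ∧ lam e0 + φ e0.1 - φ e0.2 = 0 ∧
        ∀ x y, lam e0 ≤ φ x - φ y := by
      by_cases hvt : e0.2 = t
      · have hP0len3 : 3 ≤ P0.length := by omega
        have hu_ne_s : e0.1 ≠ s := by
          intro h
          apply st_not_arc hnd0 hh0 hl0 hP0len3
          have : (s, t) = e0 := by rw [← h, ← hvt]
          rw [this]; exact he0
        refine ⟨fun x => if x = e0.1 then -lam e0 else 0, ?_, ?_, ?_, ?_⟩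
        · exact if_neg (Ne.symm hu_ne_s)
        · exact if_neg (Ne.symm hu_ne_t)
        · show lam e0 + (if e0.1 = e0.1 then -lam e0 else 0)
              - (if e0.2 = e0.1 then -lam e0 else 0) = 0
          rw [if_pos rfl, if_neg (Ne.symm hne0)]; ring
        · intro x y
          have hx : (0 : ℝ) ≤ (if x = e0.1 then -lam e0 else 0) := by
            split <;> [linarith; linarith]
          have hy : (if y = e0.1 then -lam e0 else 0) ≤ -lam e0 := by
            split <;> [linarith; linarith]
          linarith
      · refine ⟨fun x => if x = e0.2 then lam e0 else 0, ?_, ?_, ?_, ?_⟩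
        · exact if_neg (Ne.symm hv_ne_s)
        · exact if_neg (fun h => hvt h.symm)
        · show lam e0 + (if e0.1 = e0.2 then lam e0 else 0)
              - (if e0.2 = e0.2 then lam e0 else 0) = 0
          rw [if_neg hne0, if_pos rfl]; ring
        · intro x y
          have hx : lam e0 ≤ (if x = e0.2 then lam e0 else 0) := by
            split <;> [linarith; linarith]
          have hy : (if y = e0.2 then lam e0 else 0) ≤ 0 := by
            split <;> [linarith; linarith]
          linarith
    obtain ⟨φ, hφs, hφt, hφe, hφb⟩ := hphi
    refine ⟨fun e => max (lam e + φ e.1 - φ e.2) 0, fun e => le_max_right _ _,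
      fun P hP => ?_⟩
    have harcs : ∀ f ∈ arcsOf P,
        max (lam f + φ f.1 - φ f.2) 0 = lam f + (φ f.1 - φ f.2) := by
      intro f hf
      rw [← add_sub_assoc]
      apply max_eq_left
      by_cases hfe : f = e0
      · subst hfe; linarith
      · have h1 := hpair f ⟨P, hP, hf⟩ hfe
        have h2 := hφb f.1 f.2
        linarith
    have e1 : ((arcsOf P).map fun e => max (lam e + φ e.1 - φ e.2) 0)
        = (arcsOf P).map fun f => lam f + (φ f.1 - φ f.2) :=
      List.map_congr_left harcs
    have e2 : ((arcsOf P).map fun f => lam f + (φ f.1 - φ f.2)).sum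
        = ((arcsOf P).map lam).sum + ((arcsOf P).map fun f => φ f.1 - φ f.2).sum :=
      sum_map_add' _ _ _
    have e3 := telescope φ P s t hP.2.1 hP.2.2.1
    rw [key P hP]
    unfold linCost
    rw [e1, e2, e3, hφs, hφt]
    ring
  · refine ⟨fun e => max (lam e) 0, fun e => le_max_right _ _, fun P hP => ?_⟩
    rw [key P hP]
    unfold linCost
    congr 1
    refine (List.map_congr_left fun e he => ?_).symm
    push_neg at hbad
    exact max_eq_left (hbad e ⟨P, hP, he⟩)
end

section
/- Let I = (K_n^*, s, t, c, Q) be a QSPP instance with n ≥ 4, c = 0, and q_{ef} = 0 for every pair of arcs not contained together in any s-t path. Then CP_k ≤ CP_{k+1} / (n−k−1) for every k = 3, …, n−2. -/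
/-- The arc relation of the complete symmetric digraph `K_n^*` on vertices `1,…,n`
with source `1` and target `n`, from which the incoming arcs of the source, the
outgoing arcs of the target and the arc from source to target have been removed. -/
def knArc (n : ℕ) : ℕ → ℕ → Prop := fun i j =>
  1 ≤ i ∧ i ≤ n ∧ 1 ≤ j ∧ j ≤ n ∧ i ≠ j ∧ j ≠ 1 ∧ i ≠ n ∧ ¬(i = 1 ∧ j = n)

/-- `CP_k`: the total cost (with zero linear costs) of all `s`-`t` paths of length `k`
in `K_n^*`. -/
noncomputable def CPsum (n : ℕ) (Q : ℕ × ℕ → ℕ × ℕ → ℝ) (k : ℕ) : ℝ :=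
  ∑ᶠ (P : List ℕ) (_ : IsPath (knArc n) 1 n P ∧ P.length = k + 1),
    cost (fun _ => 0) Q P



section ListLemmas
variable {α : Type*} {l X Y : List α} {a b c v x y : α}

lemma arcsOf_cons_cons (a b : α) (l : List α) :
    arcsOf (a :: b :: l) = (a, b) :: arcsOf (b :: l) := by
  simp [arcsOf]

lemma map_snd_arcsOf : ∀ (l : List α), (arcsOf l).map Prod.snd = l.tail
  | [] => rfl
  | [a] => rfl
  | a :: b :: t => by
      rw [arcsOf_cons_cons]
      simpa using map_snd_arcsOf (b :: t)

lemma map_fst_arcsOf : ∀ (l : List α), (arcsOf l).map Prod.fst = l.dropLast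
  | [] => rfl
  | [a] => rfl
  | a :: b :: t => by
      rw [arcsOf_cons_cons]
      simpa using map_fst_arcsOf (b :: t)

lemma nodup_arcsOf (h : l.Nodup) : (arcsOf l).Nodup := by
  apply List.Nodup.of_map Prod.snd
  rw [map_snd_arcsOf]
  exact h.tail

lemma mem_of_mem_arcsOf {e : α × α} (h : e ∈ arcsOf l) : e.1 ∈ l ∧ e.2 ∈ l := by
  constructor
  · have := List.mem_map_of_mem (f := Prod.fst) h
    rw [map_fst_arcsOf] at this
    exact List.dropLast_sublist l |>.mem this
  · have := List.mem_map_of_mem (f := Prod.snd) h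
    rw [map_snd_arcsOf] at this
    exact List.mem_of_mem_tail this

lemma arcsOf_append (X : List α) (y : α) (Y : List α) :
    arcsOf (X ++ y :: Y) = arcsOf (X ++ [y]) ++ arcsOf (y :: Y) := by
  induction X with
  | nil => simp [arcsOf]
  | cons x X ih =>
      cases X with
      | nil => simp [arcsOf_cons_cons, arcsOf]
      | cons x' X' =>
          simp only [List.cons_append, arcsOf_cons_cons] at *
          rw [ih]

lemma mem_arcsOf_iff : (a, b) ∈ arcsOf l ↔ ∃ X Y, l = X ++ a :: b :: Y := by
  constructor
  · intro h
    induction l with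
    | nil => simp [arcsOf] at h
    | cons x t ih =>
        cases t with
        | nil => simp [arcsOf] at h
        | cons z t' =>
            rw [arcsOf_cons_cons, List.mem_cons] at h
            rcases h with h | h
            · exact ⟨[], t', by simp [Prod.ext_iff] at h; simp [h.1, h.2]⟩
            · obtain ⟨X, Y, hXY⟩ := ih h
              exact ⟨x :: X, Y, by simp [hXY]⟩
  · rintro ⟨X, Y, rfl⟩
    rw [arcsOf_append, List.mem_append, arcsOf_cons_cons]
    simp

lemma chain'_iff_arcs {A : α → α → Prop} :
    l.Chain' A ↔ ∀ p ∈ arcsOf l, A p.1 p.2 := by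
  induction l with
  | nil => simp [arcsOf, List.Chain']
  | cons x t ih =>
      cases t with
      | nil => simp [arcsOf, List.Chain']
      | cons z t' =>
          rw [show List.Chain' A (x :: z :: t') ↔ A x z ∧ List.Chain' A (z :: t') from
            List.isChain_cons_cons, arcsOf_cons_cons, ih]
          constructor
          · rintro ⟨h1, h2⟩ p hp
            rcases List.mem_cons.mp hp with rfl | hp
            · exact h1
            · exact h2 p hp
          · intro h
            exact ⟨h _ (List.mem_cons_self), fun p hp => h p (List.mem_cons_of_mem _ hp)⟩

lemma arc_snd_unique (hl : l.Nodup) (h1 : (a, b) ∈ arcsOf l) (h2 : (a, c) ∈ arcsOf l) :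
    b = c := by
  have hm : ((arcsOf l).map Prod.fst).Nodup := by
    rw [map_fst_arcsOf]; exact hl.sublist (List.dropLast_sublist l)
  have := List.inj_on_of_nodup_map hm h1 h2 rfl
  exact congrArg Prod.snd this

lemma arc_fst_unique (hl : l.Nodup) (h1 : (a, c) ∈ arcsOf l) (h2 : (b, c) ∈ arcsOf l) :
    a = b := by
  have hm : ((arcsOf l).map Prod.snd).Nodup := by
    rw [map_snd_arcsOf]; exact hl.tail
  have := List.inj_on_of_nodup_map hm h1 h2 rfl
  exact congrArg Prod.fst this

end ListLemmas

/-- Insert `v` after the first occurrence of `a`. -/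
def splice (v a : ℕ) : List ℕ → List ℕ
  | [] => []
  | x :: xs => if x = a then x :: v :: xs else x :: splice v a xs

lemma splice_append {a : ℕ} {X : List ℕ} (hX : a ∉ X) (v : ℕ) (R : List ℕ) :
    splice v a (X ++ a :: R) = X ++ a :: v :: R := by
  induction X with
  | nil => simp [splice]
  | cons x X ih =>
      have hxa : x ≠ a := fun h => hX (h ▸ List.mem_cons_self)
      simp only [List.cons_append, splice, if_neg hxa]
      rw [ih (fun h => hX (List.mem_cons_of_mem _ h))]

lemma finite_lists (s : Finset ℕ) : ∀ m : ℕ,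
    {l : List ℕ | l.length = m ∧ ∀ x ∈ l, x ∈ s}.Finite
  | 0 => (Set.finite_singleton ([] : List ℕ)).subset (by
      rintro l ⟨h1, _⟩; simp [List.length_eq_zero_iff.mp h1])
  | (m + 1) => by
      have h := finite_lists s m
      have : {l : List ℕ | l.length = m + 1 ∧ ∀ x ∈ l, x ∈ s} ⊆
          (fun p : ℕ × List ℕ => p.1 :: p.2) ''
            ((s : Set ℕ) ×ˢ {l : List ℕ | l.length = m ∧ ∀ x ∈ l, x ∈ s}) := by
        rintro l ⟨h1, h2⟩
        cases l with
        | nil => simp at h1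
        | cons x t =>
            exact ⟨(x, t), ⟨h2 x (List.mem_cons_self),
              by simpa using h1, fun y hy => h2 y (List.mem_cons_of_mem _ hy)⟩, rfl⟩
      exact ((s.finite_toSet.prod h).image _).subset this


section PathLemmas
variable {n : ℕ} {P : List ℕ} {a b v : ℕ}

lemma arcs_knArc (hP : IsPath (knArc n) 1 n P) {e : ℕ × ℕ} (he : e ∈ arcsOf P) :
    knArc n e.1 e.2 :=
  chain'_iff_arcs.mp hP.2.2.2.2 e he

lemma one_mem_path (hP : IsPath (knArc n) 1 n P) : (1 : ℕ) ∈ P :=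
  List.mem_of_mem_head? (by rw [hP.2.1]; rfl)

lemma n_mem_path (hP : IsPath (knArc n) 1 n P) : n ∈ P :=
  List.mem_of_mem_getLast? (by rw [hP.2.2.1]; rfl)

lemma mem_Icc_of_mem_path (hP : IsPath (knArc n) 1 n P) (hx : v ∈ P) :
    v ∈ Finset.Icc 1 n := by
  obtain ⟨X, Y, rfl⟩ := List.append_of_mem hx
  cases Y with
  | nil =>
      -- v is the last element, hence v = n
      have : (X ++ [v]).getLast? = some n := hP.2.2.1
      rw [List.getLast?_concat] at this
      have hvn : v = n := by injection this
      -- get 1 ≤ n from the first arc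
      obtain ⟨x, y, t, hxyt⟩ : ∃ x y t, X ++ [v] = x :: y :: t := by
        have h2 := hP.1
        match h : X ++ [v], h2 with
        | x :: y :: t, _ => exact ⟨x, y, t, rfl⟩
      have harc : (x, y) ∈ arcsOf (X ++ [v]) := by
        rw [hxyt, arcsOf_cons_cons]; exact List.mem_cons_self
      have hk := arcs_knArc hP harc
      rw [hvn]
      exact Finset.mem_Icc.mpr ⟨le_trans hk.2.2.1 hk.2.2.2.1, le_refl n⟩
  | cons y Y' =>
      have harc : (v, y) ∈ arcsOf (X ++ v :: y :: Y') := mem_arcsOf_iff.mpr ⟨X, Y', rfl⟩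
      have := arcs_knArc hP harc
      exact Finset.mem_Icc.mpr ⟨this.1, this.2.1⟩

end PathLemmas

section SpliceSpec
variable {n : ℕ} {P : List ℕ} {a b v : ℕ}

lemma splice_spec (hP : IsPath (knArc n) 1 n P) (hab : (a, b) ∈ arcsOf P)
    (hv1 : v ∈ Finset.Icc 1 n) (hv2 : v ∉ P) :
    IsPath (knArc n) 1 n (splice v a P) ∧ (splice v a P).length = P.length + 1 ∧
    v ∈ splice v a P ∧ (a, v) ∈ arcsOf (splice v a P) ∧
    (splice v a P).erase v = P ∧
    ((arcsOf (splice v a P)).toFinset.filter fun e => e.1 ≠ v ∧ e.2 ≠ v)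
      = ((arcsOf P).toFinset).erase (a, b) := by
  classical
  have hknab : knArc n a b := arcs_knArc hP hab
  have h1P : (1 : ℕ) ∈ P := one_mem_path hP
  have hnP : n ∈ P := n_mem_path hP
  obtain ⟨X, Y, hXY⟩ := mem_arcsOf_iff.mp hab
  obtain ⟨h2, hhead, hlast, hnd, hch⟩ := hP
  subst hXY
  have hndX : a ∉ X := fun hmem =>
    (List.nodup_append'.mp hnd).2.2 hmem (List.mem_cons_self)
  have hbX : b ∉ X := fun hmem =>
    (List.nodup_append'.mp hnd).2.2 hmem (List.mem_cons_of_mem _ (List.mem_cons_self))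
  have hndc : (a :: b :: Y).Nodup := (List.nodup_append.mp hnd).2.1
  have haY : a ∉ b :: Y := (List.nodup_cons.mp hndc).1
  have hsp : splice v a (X ++ a :: b :: Y) = X ++ a :: v :: b :: Y :=
    splice_append hndX v (b :: Y)
  have hvX : v ∉ X ++ [a] := by
    intro h; apply hv2
    rcases List.mem_append.mp h with h | h
    · exact List.mem_append.mpr (Or.inl h)
    · simp at h; subst h; simp
  have hvbY : v ∉ b :: Y := fun h => hv2 (by simp [List.mem_append, h])
  have haP : a ∈ X ++ a :: b :: Y := by simp
  have hbP : b ∈ X ++ a :: b :: Y := by simp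
  -- arcs decompositions
  have harcP : arcsOf (X ++ a :: b :: Y)
      = arcsOf (X ++ [a]) ++ (a, b) :: arcsOf (b :: Y) := by
    rw [arcsOf_append, arcsOf_cons_cons]
  have harcP' : arcsOf (X ++ a :: v :: b :: Y)
      = arcsOf (X ++ [a]) ++ (a, v) :: (v, b) :: arcsOf (b :: Y) := by
    rw [arcsOf_append, arcsOf_cons_cons, arcsOf_cons_cons]
  -- component facts
  have hcomp1 : ∀ e ∈ arcsOf (X ++ [a]), e.1 ≠ v ∧ e.2 ≠ v ∧ e ≠ (a, b) := by
    intro e he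
    obtain ⟨he1, he2⟩ := mem_of_mem_arcsOf he
    refine ⟨fun h => hvX (h ▸ he1), fun h => hvX (h ▸ he2), fun h => ?_⟩
    subst h
    rcases List.mem_append.mp he2 with h | h
    · exact hbX h
    · simp at h; exact hknab.2.2.2.2.1 h.symm
  have hcomp2 : ∀ e ∈ arcsOf (b :: Y), e.1 ≠ v ∧ e.2 ≠ v ∧ e ≠ (a, b) := by
    intro e he
    obtain ⟨he1, he2⟩ := mem_of_mem_arcsOf he
    refine ⟨fun h => hvbY (h ▸ he1), fun h => hvbY (h ▸ he2), fun h => ?_⟩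
    subst h
    exact haY he1
  -- memberships in P for a, b kept; knArc for new arcs
  have hva : v ≠ a := fun h => hv2 (h ▸ haP)
  have hvb : v ≠ b := fun h => hv2 (h ▸ hbP)
  have hv1' : v ≠ 1 := fun h => hv2 (h ▸ h1P)
  have hvn : v ≠ n := fun h => hv2 (h ▸ hnP)
  obtain ⟨hv1le, hvlen⟩ := Finset.mem_Icc.mp hv1
  have hknav : knArc n a v :=
    ⟨hknab.1, hknab.2.1, hv1le, hvlen, fun h => hva h.symm, hv1', hknab.2.2.2.2.2.2.1,
      fun h => hvn h.2⟩
  have hknvb : knArc n v b :=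
    ⟨hv1le, hvlen, hknab.2.2.1, hknab.2.2.2.1, hvb, hknab.2.2.2.2.2.1, hvn,
      fun h => hv1' h.1⟩
  rw [hsp]
  refine ⟨⟨?_, ?_, ?_, ?_, ?_⟩, by simp; omega, by simp, ?_, ?_, ?_⟩
  · simp; omega
  · -- head?
    rw [List.head?_append] at hhead ⊢
    cases X <;> simpa using hhead
  · -- getLast?
    rw [List.getLast?_append, List.getLast?_cons_cons] at hlast
    rw [List.getLast?_append, List.getLast?_cons_cons, List.getLast?_cons_cons]
    exact hlast
  · -- Nodup
    have hperm := List.perm_middle (a := v) (l₁ := X ++ [a]) (l₂ := b :: Y)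
    have h2' : ((X ++ [a]) ++ v :: b :: Y).Nodup := by
      rw [hperm.nodup_iff, List.nodup_cons]
      exact ⟨by simpa using hv2, by simpa using hnd⟩
    simpa using h2'
  · -- chain'
    rw [chain'_iff_arcs]
    intro e he
    rw [harcP'] at he
    rcases List.mem_append.mp he with h | h
    · exact chain'_iff_arcs.mp hch e (by rw [harcP]; exact List.mem_append.mpr (Or.inl h))
    · rcases List.mem_cons.mp h with rfl | h
      · exact hknav
      · rcases List.mem_cons.mp h with rfl | h
        · exact hknvb
        · exact chain'_iff_arcs.mp hch e
            (by rw [harcP]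
                exact List.mem_append.mpr (Or.inr (List.mem_cons_of_mem _ h)))
  · -- (a, v) is an arc
    rw [harcP']; simp
  · -- erase
    have : X ++ a :: v :: b :: Y = (X ++ [a]) ++ v :: b :: Y := by simp
    rw [this, List.erase_append_right _ hvX, List.erase_cons_head]
    simp
  · -- the filter identity
    ext e
    simp only [Finset.mem_filter, Finset.mem_erase, List.mem_toFinset, harcP, harcP',
      List.mem_append, List.mem_cons]
    constructor
    · rintro ⟨h | h | h | h, hv1, hv2⟩
      · exact ⟨(hcomp1 e h).2.2, Or.inl h⟩
      · exact absurd (congrArg Prod.snd h) hv2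
      · exact absurd (congrArg Prod.fst h) hv1
      · exact ⟨(hcomp2 e h).2.2, Or.inr (Or.inr h)⟩
    · rintro ⟨hne, h | h | h⟩
      · exact ⟨Or.inl h, (hcomp1 e h).1, (hcomp1 e h).2.1⟩
      · exact absurd h hne
      · exact ⟨Or.inr (Or.inr (Or.inr h)), (hcomp2 e h).1, (hcomp2 e h).2.1⟩

end SpliceSpec

section Geometric
variable {n : ℕ} {P : List ℕ}

lemma head_arc {x y : ℕ} (hnd : P.Nodup) (hh : P.head? = some x)
    (hxy : (x, y) ∈ arcsOf P) : ∃ T, P = x :: y :: T := by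
  obtain ⟨X, Y, rfl⟩ := mem_arcsOf_iff.mp hxy
  cases X with
  | nil => exact ⟨Y, rfl⟩
  | cons x' X' =>
      exfalso
      have hx' : x' = x := by simpa using hh
      subst hx'
      exact (List.nodup_append'.mp hnd).2.2 (List.mem_cons_self)
        (List.mem_cons_self)

lemma last_single {z : ℕ} {T : List ℕ} (h : (z :: T).getLast? = some z)
    (hz : z ∉ T) : T = [] := by
  cases T with
  | nil => rfl
  | cons t T' =>
      exfalso
      rw [List.getLast?_cons_cons] at h
      exact hz (List.mem_of_mem_getLast? (h ▸ rfl))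

lemma inc4_comm (e f : ℕ × ℕ) :
    ({e.1, e.2, f.1, f.2} : Finset ℕ) = ({f.1, f.2, e.1, e.2} : Finset ℕ) := by
  ext x; simp; tauto

/-- auxiliary case: `e = (a, n)` and `f.2 ≠ n`. -/
lemma exists_two_incident_aux (hP : IsPath (knArc n) 1 n P) (hlen : 4 ≤ P.length)
    {e f : ℕ × ℕ} (he : e ∈ arcsOf P) (hf : f ∈ arcsOf P) (hef : e ≠ f)
    (hbn : e.2 = n) (hdn : f.2 ≠ n) :
    ∃ w₁ w₂ : ℕ, w₁ ≠ w₂ ∧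
      (w₁ ∈ P ∧ w₁ ≠ 1 ∧ w₁ ≠ n ∧ w₁ ∈ ({e.1, e.2, f.1, f.2} : Finset ℕ)) ∧
      (w₂ ∈ P ∧ w₂ ≠ 1 ∧ w₂ ≠ n ∧ w₂ ∈ ({e.1, e.2, f.1, f.2} : Finset ℕ)) := by
  obtain ⟨a, b⟩ := e
  obtain ⟨c, d⟩ := f
  simp only at hbn hdn
  subst b
  have hke := arcs_knArc hP he
  have hkf := arcs_knArc hP hf
  have ha1 : a ≠ 1 := fun h => hke.2.2.2.2.2.2.2 ⟨h, rfl⟩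
  have han : a ≠ n := hke.2.2.2.2.2.2.1
  have haP : a ∈ P := (mem_of_mem_arcsOf he).1
  by_cases had : a = d
  · -- f = (c, a); use w₁ = a, w₂ = c
    subst had
    have hcP : c ∈ P := (mem_of_mem_arcsOf hf).1
    have hcn : c ≠ n := hkf.2.2.2.2.2.2.1
    have hca : c ≠ a := hkf.2.2.2.2.1
    have hc1 : c ≠ 1 := by
      intro h
      subst h
      -- P = 1 :: a :: T, then T = n :: T₂, then T₂ = [], contradicting length
      obtain ⟨T, hT⟩ := head_arc hP.2.2.2.1 hP.2.1 hf
      subst hT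
      have hndT : (a :: T).Nodup := (List.nodup_cons.mp hP.2.2.2.1).2
      have heT : (a, n) ∈ arcsOf (a :: T) := by
        rcases List.mem_cons.mp (by
          rw [arcsOf_cons_cons] at he; exact he) with h | h
        · exact absurd (congrArg Prod.fst h) ha1
        · exact h
      obtain ⟨T₂, hT₂⟩ := head_arc hndT rfl heT
      obtain ⟨rfl⟩ : T = n :: T₂ := by
        have := hT₂
        injection this with h1 h2
      have hlast : (n :: T₂).getLast? = some n := by
        have h := hP.2.2.1
        rwa [List.getLast?_cons_cons, List.getLast?_cons_cons] at h
      have hnT₂ : n ∉ T₂ := by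
        have := hP.2.2.2.1
        simp [List.nodup_cons] at this
        exact this.2.2.1
      have : T₂ = [] := last_single hlast hnT₂
      subst this
      have := hlen
      simp at this
    exact ⟨a, c, fun h => hca h.symm, ⟨haP, ha1, han, by simp⟩, ⟨hcP, hc1, hcn, by simp⟩⟩
  · -- w₁ = a, w₂ = d
    have hdP : d ∈ P := (mem_of_mem_arcsOf hf).2
    have hd1 : d ≠ 1 := hkf.2.2.2.2.2.1
    exact ⟨a, d, had, ⟨haP, ha1, han, by simp⟩, ⟨hdP, hd1, hdn, by simp⟩⟩

end Geometric

lemma exists_two_incident {n : ℕ} {P : List ℕ} (hP : IsPath (knArc n) 1 n P)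
    (hlen : 4 ≤ P.length) {e f : ℕ × ℕ} (he : e ∈ arcsOf P) (hf : f ∈ arcsOf P)
    (hef : e ≠ f) :
    ∃ w₁ w₂ : ℕ, w₁ ≠ w₂ ∧
      (w₁ ∈ P ∧ w₁ ≠ 1 ∧ w₁ ≠ n ∧ w₁ ∈ ({e.1, e.2, f.1, f.2} : Finset ℕ)) ∧
      (w₂ ∈ P ∧ w₂ ≠ 1 ∧ w₂ ≠ n ∧ w₂ ∈ ({e.1, e.2, f.1, f.2} : Finset ℕ)) := by
  obtain ⟨a, b⟩ := e
  obtain ⟨c, d⟩ := f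
  by_cases hbn : b = n
  · by_cases hdn : d = n
    · exfalso
      subst b
      subst d
      exact hef (by rw [arc_fst_unique hP.2.2.2.1 he hf])
    · exact exists_two_incident_aux hP hlen he hf hef hbn hdn
  · by_cases hdn : d = n
    · obtain ⟨w₁, w₂, h12, hw1, hw2⟩ :=
        exists_two_incident_aux hP hlen hf he (Ne.symm hef) hdn hbn
      refine ⟨w₁, w₂, h12, ⟨hw1.1, hw1.2.1, hw1.2.2.1, ?_⟩,
        ⟨hw2.1, hw2.2.1, hw2.2.2.1, ?_⟩⟩
      · have := hw1.2.2.2; simp at this ⊢; tauto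
      · have := hw2.2.2.2; simp at this ⊢; tauto
    · have hke := arcs_knArc hP he
      have hkf := arcs_knArc hP hf
      have hbd : b ≠ d := by
        intro h
        subst h
        exact hef (by rw [arc_fst_unique hP.2.2.2.1 he hf])
      exact ⟨b, d, hbd,
        ⟨(mem_of_mem_arcsOf he).2, hke.2.2.2.2.2.1, hbn, by simp⟩,
        ⟨(mem_of_mem_arcsOf hf).2, hkf.2.2.2.2.2.1, hdn, by simp⟩⟩


section Sums
open Finset

lemma pathSet_finite (n m : ℕ) :
    {P : List ℕ | IsPath (knArc n) 1 n P ∧ P.length = m}.Finite := by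
  apply (finite_lists (Finset.Icc 1 n) m).subset
  rintro P ⟨hP, hlen⟩
  exact ⟨hlen, fun x hx => mem_Icc_of_mem_path hP hx⟩

noncomputable def pathF (n m : ℕ) : Finset (List ℕ) := (pathSet_finite n m).toFinset

lemma mem_pathF {n m : ℕ} {P : List ℕ} :
    P ∈ pathF n m ↔ IsPath (knArc n) 1 n P ∧ P.length = m :=
  Set.Finite.mem_toFinset _

lemma CPsum_eq (n : ℕ) (Q : ℕ × ℕ → ℕ × ℕ → ℝ) (k : ℕ) :
    CPsum n Q k = ∑ P ∈ pathF n (k + 1), cost (fun _ => 0) Q P := by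
  have h := finsum_mem_coe_finset (fun P => cost (fun _ => 0) Q P) (pathF n (k + 1))
  rw [show ((pathF n (k+1) : Finset (List ℕ)) : Set (List ℕ))
      = {P : List ℕ | IsPath (knArc n) 1 n P ∧ P.length = k + 1} from
    Set.Finite.coe_toFinset _] at h
  exact h

def arcsF (P : List ℕ) : Finset (ℕ × ℕ) := (arcsOf P).toFinset

lemma mem_arcsF {P : List ℕ} {e : ℕ × ℕ} : e ∈ arcsF P ↔ e ∈ arcsOf P :=
  List.mem_toFinset

lemma card_arcsF {P : List ℕ} (hnd : P.Nodup) : (arcsF P).card = P.length - 1 := by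
  rw [arcsF, List.toFinset_card_of_nodup (nodup_arcsOf hnd)]
  simp [arcsOf, List.length_zip]

lemma cost_eq (Q : ℕ × ℕ → ℕ × ℕ → ℝ) {P : List ℕ} (hnd : P.Nodup) :
    cost (fun _ => 0) Q P = ∑ e ∈ arcsF P, ∑ f ∈ arcsF P, Q e f := by
  have hnda := nodup_arcsOf hnd
  rw [cost, linCost]
  simp only [List.map_const', List.sum_replicate, smul_zero, add_zero, arcsF]
  rw [List.sum_toFinset _ hnda]
  refine congrArg List.sum (List.map_congr_left fun e he => ?_)
  rw [List.sum_toFinset _ hnda]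

end Sums

section Counting
open Finset
variable {n : ℕ} (Q : ℕ × ℕ → ℕ × ℕ → ℝ)

noncomputable def Dsum (P : List ℕ) (w : ℕ) : ℝ :=
  ∑ e ∈ (arcsF P).filter (fun e => e.1 ≠ w ∧ e.2 ≠ w),
    ∑ f ∈ (arcsF P).filter (fun e => e.1 ≠ w ∧ e.2 ≠ w), Q e f

def internalF (n : ℕ) (P : List ℕ) : Finset ℕ := P.toFinset \ {1, n}

lemma Dsum_nonneg (hQ0 : ∀ e f, 0 ≤ Q e f) (P : List ℕ) (w : ℕ) :
    0 ≤ Dsum Q P w :=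
  Finset.sum_nonneg fun e _ => Finset.sum_nonneg fun f _ => hQ0 e f

lemma double_filter_sum (s : Finset (ℕ × ℕ)) (p : ℕ × ℕ → Prop) [DecidablePred p] :
    (∑ e ∈ s.filter p, ∑ f ∈ s.filter p, Q e f)
      = ∑ e ∈ s, ∑ f ∈ s, if p e ∧ p f then Q e f else 0 := by
  rw [Finset.sum_filter]
  refine Finset.sum_congr rfl fun e he => ?_
  rw [Finset.sum_filter]
  by_cases hp : p e
  · simp [hp]
  · simp [hp]

lemma sum_ite_count {α : Type*} (W : Finset α) (c : α → Prop) [DecidablePred c] (q : ℝ) :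
    ∑ w ∈ W, (if c w then q else 0) = ((W.filter c).card : ℝ) * q := by
  rw [← Finset.sum_filter, Finset.sum_const, nsmul_eq_mul]

lemma card_internalF {P : List ℕ} (hn : 4 ≤ n) (hP : IsPath (knArc n) 1 n P) :
    (internalF n P).card = P.length - 2 := by
  have hnd := hP.2.2.2.1
  have h1 : (1 : ℕ) ∈ P.toFinset := List.mem_toFinset.mpr (one_mem_path hP)
  have h2 : n ∈ P.toFinset := List.mem_toFinset.mpr (n_mem_path hP)
  have h1n : (1 : ℕ) ≠ n := by omega
  rw [internalF, Finset.card_sdiff_of_subset (by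
    intro x hx
    simp only [Finset.mem_insert, Finset.mem_singleton] at hx
    rcases hx with rfl | rfl <;> assumption)]
  rw [List.toFinset_card_of_nodup hnd, Finset.card_insert_of_notMem (by simp [h1n]),
    Finset.card_singleton]

lemma sum_Dsum_le (hn : 4 ≤ n) (hQ0 : ∀ e f, 0 ≤ Q e f) (hQd : ∀ e, Q e e = 0)
    {P : List ℕ} {k : ℕ} (hk : 3 ≤ k)
    (hP : IsPath (knArc n) 1 n P) (hlen : P.length = k + 2) :
    ∑ w ∈ internalF n P, Dsum Q P w ≤ ((k : ℝ) - 2) * cost (fun _ => 0) Q P := by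
  have hnd := hP.2.2.2.1
  have hca : (internalF n P).card = k := by rw [card_internalF hn hP, hlen]; omega
  calc ∑ w ∈ internalF n P, Dsum Q P w
      = ∑ w ∈ internalF n P, ∑ e ∈ arcsF P, ∑ f ∈ arcsF P,
          if (e.1 ≠ w ∧ e.2 ≠ w) ∧ (f.1 ≠ w ∧ f.2 ≠ w) then Q e f else 0 :=
        Finset.sum_congr rfl fun w _ => double_filter_sum Q _ _
    _ = ∑ e ∈ arcsF P, ∑ f ∈ arcsF P, ∑ w ∈ internalF n P,
          (if (e.1 ≠ w ∧ e.2 ≠ w) ∧ (f.1 ≠ w ∧ f.2 ≠ w) then Q e f else 0) := by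
        rw [Finset.sum_comm]
        exact Finset.sum_congr rfl fun e _ => Finset.sum_comm
    _ ≤ ∑ e ∈ arcsF P, ∑ f ∈ arcsF P, ((k : ℝ) - 2) * Q e f := by
        refine Finset.sum_le_sum fun e he => Finset.sum_le_sum fun f hf => ?_
        rw [sum_ite_count]
        by_cases hQ : Q e f = 0
        · simp [hQ]
        · have hef : e ≠ f := fun h => hQ (h ▸ hQd e)
          obtain ⟨w₁, w₂, h12, ⟨hw1P, hw11, hw1n, hw1i⟩, ⟨hw2P, hw21, hw2n, hw2i⟩⟩ :=
            exists_two_incident hP (by omega) (mem_arcsF.mp he) (mem_arcsF.mp hf) hef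
          have hw1m : w₁ ∈ internalF n P := by
            simp [internalF, List.mem_toFinset, hw1P, hw11, hw1n]
          have hw2m : w₂ ∈ internalF n P := by
            simp [internalF, List.mem_toFinset, hw2P, hw21, hw2n]
          have hsub : (internalF n P).filter
              (fun w => (e.1 ≠ w ∧ e.2 ≠ w) ∧ (f.1 ≠ w ∧ f.2 ≠ w))
              ⊆ internalF n P \ {w₁, w₂} := by
            intro x hx
            rw [Finset.mem_filter] at hx
            rw [Finset.mem_sdiff]
            refine ⟨hx.1, ?_⟩
            simp only [Finset.mem_insert, Finset.mem_singleton]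
            rintro (rfl | rfl)
            · simp only [Finset.mem_insert, Finset.mem_singleton] at hw1i
              rcases hw1i with h | h | h | h <;>
                first
                | exact hx.2.1.1 h.symm
                | exact hx.2.1.2 h.symm
                | exact hx.2.2.1 h.symm
                | exact hx.2.2.2 h.symm
            · simp only [Finset.mem_insert, Finset.mem_singleton] at hw2i
              rcases hw2i with h | h | h | h <;>
                first
                | exact hx.2.1.1 h.symm
                | exact hx.2.1.2 h.symm
                | exact hx.2.2.1 h.symm
                | exact hx.2.2.2 h.symm
          have hcard : ((internalF n P).filter
              (fun w => (e.1 ≠ w ∧ e.2 ≠ w) ∧ (f.1 ≠ w ∧ f.2 ≠ w))).card ≤ k - 2 := by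
            calc _ ≤ (internalF n P \ {w₁, w₂}).card := Finset.card_le_card hsub
              _ = (internalF n P).card - ({w₁, w₂} : Finset ℕ).card :=
                  Finset.card_sdiff_of_subset (by
                    intro x hx
                    simp only [Finset.mem_insert, Finset.mem_singleton] at hx
                    rcases hx with rfl | rfl <;> assumption)
              _ ≤ k - 2 := by
                  rw [hca, Finset.card_insert_of_notMem (by simpa using h12),
                    Finset.card_singleton]
          have hcast : (((internalF n P).filter
              (fun w => (e.1 ≠ w ∧ e.2 ≠ w) ∧ (f.1 ≠ w ∧ f.2 ≠ w))).card : ℝ)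
              ≤ (k : ℝ) - 2 := by
            have h2 := Nat.cast_le (α := ℝ).mpr hcard
            rwa [Nat.cast_sub (by omega)] at h2
          exact mul_le_mul_of_nonneg_right hcast (hQ0 e f)
    _ = ((k : ℝ) - 2) * cost (fun _ => 0) Q P := by
        rw [cost_eq Q hnd, Finset.mul_sum]
        exact Finset.sum_congr rfl fun e _ => by rw [Finset.mul_sum]

lemma sum_Esum_ge (hQ0 : ∀ e f, 0 ≤ Q e f) {P : List ℕ} {k : ℕ} (hk : 3 ≤ k)
    (hnd : P.Nodup) (hlen : P.length = k + 1) :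
    ((k : ℝ) - 2) * cost (fun _ => 0) Q P ≤
      ∑ g ∈ arcsF P, ∑ e ∈ (arcsF P).erase g, ∑ f ∈ (arcsF P).erase g, Q e f := by
  have hca : (arcsF P).card = k := by rw [card_arcsF hnd, hlen]; omega
  have herase : ∀ g : ℕ × ℕ, (arcsF P).erase g = (arcsF P).filter (fun e => e ≠ g) :=
    fun g => (Finset.filter_ne' _ _).symm
  calc ((k : ℝ) - 2) * cost (fun _ => 0) Q P
      = ∑ e ∈ arcsF P, ∑ f ∈ arcsF P, ((k : ℝ) - 2) * Q e f := by
        rw [cost_eq Q hnd, Finset.mul_sum]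
        exact Finset.sum_congr rfl fun e _ => by rw [Finset.mul_sum]
    _ ≤ ∑ e ∈ arcsF P, ∑ f ∈ arcsF P, ∑ g ∈ arcsF P,
          (if e ≠ g ∧ f ≠ g then Q e f else 0) := by
        refine Finset.sum_le_sum fun e he => Finset.sum_le_sum fun f hf => ?_
        rw [sum_ite_count]
        have hsub : arcsF P \ {e, f} ⊆ (arcsF P).filter (fun g => e ≠ g ∧ f ≠ g) := by
          intro g hg
          rw [Finset.mem_sdiff] at hg
          simp only [Finset.mem_insert, Finset.mem_singleton] at hg
          rw [Finset.mem_filter]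
          exact ⟨hg.1, fun h => hg.2 (Or.inl h.symm), fun h => hg.2 (Or.inr h.symm)⟩
        have hcard : k - 2 ≤ ((arcsF P).filter (fun g => e ≠ g ∧ f ≠ g)).card := by
          calc k - 2 ≤ (arcsF P).card - ({e, f} : Finset (ℕ × ℕ)).card := by
                have h2 : ({e, f} : Finset (ℕ × ℕ)).card ≤ 2 := by
                  apply le_trans (Finset.card_insert_le _ _); simp
                omega
            _ ≤ (arcsF P \ {e, f}).card := Finset.le_card_sdiff _ _
            _ ≤ _ := Finset.card_le_card hsub
        have hcast : (k : ℝ) - 2 ≤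
            (((arcsF P).filter (fun g => e ≠ g ∧ f ≠ g)).card : ℝ) := by
          have h2 := Nat.cast_le (α := ℝ).mpr hcard
          rwa [Nat.cast_sub (by omega)] at h2
        exact mul_le_mul_of_nonneg_right hcast (hQ0 e f)
    _ = ∑ e ∈ arcsF P, ∑ g ∈ arcsF P, ∑ f ∈ arcsF P,
          (if e ≠ g ∧ f ≠ g then Q e f else 0) :=
        Finset.sum_congr rfl fun e _ => Finset.sum_comm
    _ = ∑ g ∈ arcsF P, ∑ e ∈ arcsF P, ∑ f ∈ arcsF P,
          (if e ≠ g ∧ f ≠ g then Q e f else 0) := Finset.sum_comm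
    _ = ∑ g ∈ arcsF P, ∑ e ∈ (arcsF P).erase g, ∑ f ∈ (arcsF P).erase g, Q e f := by
        refine Finset.sum_congr rfl fun g _ => ?_
        rw [herase g, double_filter_sum]

end Counting

section MainProof
open Finset

set_option maxHeartbeats 1000000 in
theorem stmt_8' (n : ℕ) (hn : 4 ≤ n) (Q : ℕ × ℕ → ℕ × ℕ → ℝ)
    (hQ0 : ∀ e f, 0 ≤ Q e f) (hQd : ∀ e, Q e e = 0) :
    ∀ k, 3 ≤ k → k ≤ n - 2 →
      CPsum n Q k ≤ CPsum n Q (k + 1) / ((n : ℝ) - k - 1) := by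
  classical
  intro k hk3 hkn
  have hk2n : k + 2 ≤ n := by omega
  have hdpos : (0 : ℝ) < (n : ℝ) - k - 1 := by
    have : (k : ℝ) + 2 ≤ (n : ℝ) := by exact_mod_cast hk2n
    linarith
  rw [CPsum_eq, CPsum_eq, le_div_iff₀ hdpos]
  have hkk : k + 1 + 1 = k + 2 := rfl
  rw [hkk]
  have key : ((n : ℝ) - k - 1) * ∑ P ∈ pathF n (k + 1), cost (fun _ => 0) Q P
      ≤ ∑ P ∈ pathF n (k + 2), cost (fun _ => 0) Q P := by
    have hkpos : (0 : ℝ) < (k : ℝ) - 2 := by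
      have : (3 : ℝ) ≤ (k : ℝ) := by exact_mod_cast hk3
      linarith
    rw [← mul_le_mul_iff_right₀ hkpos]
    have hmem1 : ∀ P ∈ pathF n (k + 1), IsPath (knArc n) 1 n P ∧ P.length = k + 1 :=
      fun P hP => mem_pathF.mp hP
    have hcardc : ∀ P ∈ pathF n (k + 1),
        ((Finset.Icc 1 n \ P.toFinset).card : ℝ) = (n : ℝ) - k - 1 := by
      intro P hP
      obtain ⟨hPp, hPl⟩ := hmem1 P hP
      have hsub : P.toFinset ⊆ Finset.Icc 1 n := fun x hx =>
        mem_Icc_of_mem_path hPp (List.mem_toFinset.mp hx)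
      rw [Finset.card_sdiff_of_subset hsub, List.toFinset_card_of_nodup hPp.2.2.2.1, hPl,
        Nat.card_Icc]
      rw [Nat.cast_sub (by omega)]
      push_cast
      ring
    set s₁ : Finset ((_ : List ℕ) × (_ : ℕ) × ℕ × ℕ) := (pathF n (k + 1)).sigma
      (fun P => (Finset.Icc 1 n \ P.toFinset).sigma (fun _ => arcsF P)) with hs₁
    set ψ : ((_ : List ℕ) × (_ : ℕ) × ℕ × ℕ) → ((_ : List ℕ) × ℕ) :=
      fun x => ⟨splice x.2.1 x.2.2.1 x.1, x.2.1⟩ with hψ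
    have hspec : ∀ x ∈ s₁,
        IsPath (knArc n) 1 n (splice x.2.1 x.2.2.1 x.1) ∧
        (splice x.2.1 x.2.2.1 x.1).length = x.1.length + 1 ∧
        x.2.1 ∈ splice x.2.1 x.2.2.1 x.1 ∧
        (x.2.2.1, x.2.1) ∈ arcsOf (splice x.2.1 x.2.2.1 x.1) ∧
        (splice x.2.1 x.2.2.1 x.1).erase x.2.1 = x.1 ∧
        IsPath (knArc n) 1 n x.1 ∧ x.1.length = k + 1 ∧ x.2.1 ∉ x.1 := by
      rintro ⟨P, v, g⟩ hx
      simp only [hs₁, Finset.mem_sigma] at hx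
      obtain ⟨hPm, hvm, hgm⟩ := hx
      obtain ⟨hPp, hPl⟩ := mem_pathF.mp hPm
      have hv1 : v ∈ Finset.Icc 1 n := (Finset.mem_sdiff.mp hvm).1
      have hv2 : v ∉ P := fun h =>
        (Finset.mem_sdiff.mp hvm).2 (List.mem_toFinset.mpr h)
      have hab : (g.1, g.2) ∈ arcsOf P := by
        rw [Prod.mk.eta]; exact mem_arcsF.mp hgm
      have spec := splice_spec hPp hab hv1 hv2
      exact ⟨spec.1, spec.2.1, spec.2.2.1, spec.2.2.2.1, spec.2.2.2.2.1,
        hPp, hPl, hv2⟩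
    have hinj : ∀ x ∈ s₁, ∀ y ∈ s₁, ψ x = ψ y → x = y := by
      rintro ⟨P₁, v₁, g₁⟩ hx ⟨P₂, v₂, g₂⟩ hy hxy
      have sx := hspec _ hx
      have sy := hspec _ hy
      have hL : splice v₁ g₁.1 P₁ = splice v₂ g₂.1 P₂ :=
        congrArg (fun s => s.1) hxy
      have hv : v₁ = v₂ := congrArg (fun s => s.2) hxy
      obtain rfl := hv
      have hP12 : P₁ = P₂ := by
        have e1 := sx.2.2.2.2.1
        have e2 := sy.2.2.2.2.1
        simp only at e1 e2
        rw [← e1, ← e2, hL]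
      obtain rfl := hP12
      have hg12 : g₁ = g₂ := by
        have a1 := sx.2.2.2.1
        have a2 := sy.2.2.2.1
        simp only at a1 a2 hL
        rw [hL] at a1
        have hndL : (splice v₁ g₂.1 P₁).Nodup := sy.1.2.2.2.1
        have hfst : g₁.1 = g₂.1 := arc_fst_unique hndL a1 a2
        have hb1 : (g₁.1, g₁.2) ∈ arcsOf P₁ := by
          simp only [hs₁, Finset.mem_sigma] at hx
          rw [Prod.mk.eta]; exact mem_arcsF.mp hx.2.2
        have hb2 : (g₁.1, g₂.2) ∈ arcsOf P₁ := by
          simp only [hs₁, Finset.mem_sigma] at hy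
          rw [hfst, Prod.mk.eta]; exact mem_arcsF.mp hy.2.2
        have hsnd : g₁.2 = g₂.2 :=
          arc_snd_unique sx.2.2.2.2.2.1.2.2.2.1 hb1 hb2
        exact Prod.ext hfst hsnd
      rw [hg12]
    have himg : s₁.image ψ ⊆ (pathF n (k + 2)).sigma (fun P' => internalF n P') := by
      intro y hy
      obtain ⟨x, hx, rfl⟩ := Finset.mem_image.mp hy
      have sx := hspec _ hx
      rw [Finset.mem_sigma]
      constructor
      · rw [mem_pathF]
        exact ⟨sx.1, by rw [sx.2.1, sx.2.2.2.2.2.2.1]⟩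
      · rw [internalF, Finset.mem_sdiff]
        refine ⟨List.mem_toFinset.mpr sx.2.2.1, ?_⟩
        simp only [Finset.mem_insert, Finset.mem_singleton]
        rintro (h | h)
        · exact sx.2.2.2.2.2.2.2 ((show x.2.1 = 1 from h) ▸ one_mem_path sx.2.2.2.2.2.1)
        · exact sx.2.2.2.2.2.2.2 ((show x.2.1 = n from h) ▸ n_mem_path sx.2.2.2.2.2.1)
    calc ((k : ℝ) - 2) * (((n : ℝ) - k - 1) * ∑ P ∈ pathF n (k + 1), cost (fun _ => 0) Q P)
        = ∑ P ∈ pathF n (k + 1), ∑ _v ∈ Finset.Icc 1 n \ P.toFinset,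
            (((k : ℝ) - 2) * cost (fun _ => 0) Q P) := by
          rw [Finset.mul_sum, Finset.mul_sum]
          refine Finset.sum_congr rfl fun P hP => ?_
          rw [Finset.sum_const, nsmul_eq_mul, hcardc P hP]
          ring
      _ ≤ ∑ P ∈ pathF n (k + 1), ∑ v ∈ Finset.Icc 1 n \ P.toFinset,
            ∑ g ∈ arcsF P, Dsum Q (splice v g.1 P) v := by
          refine Finset.sum_le_sum fun P hP => Finset.sum_le_sum fun v hv => ?_
          obtain ⟨hPp, hPl⟩ := hmem1 P hP
          have hv1 : v ∈ Finset.Icc 1 n := (Finset.mem_sdiff.mp hv).1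
          have hv2 : v ∉ P := fun h =>
            (Finset.mem_sdiff.mp hv).2 (List.mem_toFinset.mpr h)
          calc ((k : ℝ) - 2) * cost (fun _ => 0) Q P
              ≤ ∑ g ∈ arcsF P, ∑ e ∈ (arcsF P).erase g, ∑ f ∈ (arcsF P).erase g, Q e f :=
                sum_Esum_ge Q hQ0 hk3 hPp.2.2.2.1 hPl
            _ = ∑ g ∈ arcsF P, Dsum Q (splice v g.1 P) v := by
                refine Finset.sum_congr rfl fun g hg => ?_
                have hab : (g.1, g.2) ∈ arcsOf P := by
                  rw [Prod.mk.eta]; exact mem_arcsF.mp hg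
                have spec := splice_spec hPp hab hv1 hv2
                rw [Dsum]
                rw [show arcsF (splice v g.1 P) = (arcsOf (splice v g.1 P)).toFinset
                  from rfl]
                rw [spec.2.2.2.2.2, Prod.mk.eta]
                rfl
      _ = ∑ x ∈ s₁, Dsum Q (splice x.2.1 x.2.2.1 x.1) x.2.1 := by
          rw [hs₁, Finset.sum_sigma]
          refine Finset.sum_congr rfl fun P _ => ?_
          rw [Finset.sum_sigma]
      _ = ∑ y ∈ s₁.image ψ, Dsum Q y.1 y.2 := by
          rw [Finset.sum_image hinj]
      _ ≤ ∑ y ∈ (pathF n (k + 2)).sigma (fun P' => internalF n P'), Dsum Q y.1 y.2 :=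
          Finset.sum_le_sum_of_subset_of_nonneg himg
            (fun y _ _ => Dsum_nonneg Q hQ0 y.1 y.2)
      _ = ∑ P' ∈ pathF n (k + 2), ∑ w ∈ internalF n P', Dsum Q P' w :=
          Finset.sum_sigma _ _ _
      _ ≤ ∑ P' ∈ pathF n (k + 2), ((k : ℝ) - 2) * cost (fun _ => 0) Q P' := by
          refine Finset.sum_le_sum fun P' hP' => ?_
          obtain ⟨hPp, hPl⟩ := mem_pathF.mp hP'
          exact sum_Dsum_le Q hn hQ0 hQd hk3 hPp hPl
      _ = ((k : ℝ) - 2) * ∑ P' ∈ pathF n (k + 2), cost (fun _ => 0) Q P' :=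
          (Finset.mul_sum _ _ _).symm
  calc (∑ P ∈ pathF n (k + 1), cost (fun _ => 0) Q P) * ((n : ℝ) - k - 1)
      = ((n : ℝ) - k - 1) * ∑ P ∈ pathF n (k + 1), cost (fun _ => 0) Q P := mul_comm _ _
    _ ≤ _ := key

end MainProof

/-- On `K_n^*` (`n ≥ 4`), `CP_k ≤ CP_{k+1} / (n-k-1)` for `k = 3,…,n-2`. -/
theorem stmt_8 (n : ℕ) (hn : 4 ≤ n) (Q : ℕ × ℕ → ℕ × ℕ → ℝ)
    (hQ0 : ∀ e f, 0 ≤ Q e f) (hQs : ∀ e f, Q e f = Q f e) (hQd : ∀ e, Q e e = 0)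
    (hQpath : ∀ e f,
      (¬ ∃ P, IsPath (knArc n) 1 n P ∧ e ∈ arcsOf P ∧ f ∈ arcsOf P) → Q e f = 0) :
    ∀ k, 3 ≤ k → k ≤ n - 2 →
      CPsum n Q k ≤ CPsum n Q (k + 1) / ((n : ℝ) - k - 1) := by
  exact stmt_8' n hn Q hQ0 hQd
end
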